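/- Let A and B be finite planar point sets separated by the vertical line x = c (A strictly left, B strictly right), and let [a, b] with a ∈ A, b ∈ B be the upper bridge: every point of A ∪ B is weakly below the line ℓ through a and b. Then ℓ is a supporting line of conv(A ∪ B), and every point of A with x-coordinate greater than a.1 lies strictly below ℓ or equals a, provided a is the unique point of A on ℓ; symmetrically for B. Moreover a and b are consecutive vertices of the upper hull of A ∪ B: no point of A ∪ B with x-coordinate strictly between a.1 and b.1 lies on the upper hull of A ∪ B except points on ℓ. -/

import Mathlib

/-- `p` lies weakly below the line `y = α x + β`. -/
def BelowLine (α β : ℝ) (p : ℝ × ℝ) : Prop := p.2 ≤ α * p.1 + β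

/-- `p` lies on the line `y = α x + β`. -/
def OnLine (α β : ℝ) (p : ℝ × ℝ) : Prop := p.2 = α * p.1 + β

/-- `v` is an extreme point (vertex) of the convex hull of `S`. -/
def IsHullVertex (S : Set (ℝ × ℝ)) (v : ℝ × ℝ) : Prop :=
  v ∈ S ∧ v ∉ convexHull ℝ (S \ {v})

/-- `v` is a vertex of the upper hull of `S`. -/
def IsUpperVertex (S : Set (ℝ × ℝ)) (v : ℝ × ℝ) : Prop :=
  IsHullVertex S v ∧ ∃ α β : ℝ, OnLine α β v ∧ ∀ p ∈ S, BelowLine α β p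

/-- Properties of the upper bridge `[a,b]` between vertically separated sets `A` and `B`
with supporting line `ℓ : y = α x + β`: `ℓ` supports `conv (A ∪ B)`; if `a` is the only
point of `A` on `ℓ` then every point of `A` to the right of `a` is strictly below `ℓ`
(symmetrically for `B`); and `a`, `b` are consecutive on the upper hull of `A ∪ B`:
no upper hull vertex strictly between them in `x` lies off the line `ℓ`. -/
theorem upper_bridge_properties (A B : Finset (ℝ × ℝ)) (c : ℝ)
    (hinj : Set.InjOn Prod.fst ((A : Set (ℝ × ℝ)) ∪ (B : Set (ℝ × ℝ))))
    (hA : ∀ p ∈ A, p.1 < c) (hB : ∀ p ∈ B, c < p.1)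
    (a b : ℝ × ℝ) (ha : a ∈ A) (hb : b ∈ B) (α β : ℝ)
    (hal : OnLine α β a) (hbl : OnLine α β b)
    (hbelow : ∀ p ∈ (A : Set (ℝ × ℝ)) ∪ (B : Set (ℝ × ℝ)), BelowLine α β p) :
    (∀ p ∈ convexHull ℝ ((A : Set (ℝ × ℝ)) ∪ (B : Set (ℝ × ℝ))), BelowLine α β p) ∧
    ((∀ p ∈ A, OnLine α β p → p = a) →
      ∀ p ∈ A, a.1 < p.1 → p.2 < α * p.1 + β) ∧
    ((∀ p ∈ B, OnLine α β p → p = b) →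
      ∀ p ∈ B, p.1 < b.1 → p.2 < α * p.1 + β) ∧
    (∀ v, IsUpperVertex ((A : Set (ℝ × ℝ)) ∪ (B : Set (ℝ × ℝ))) v →
      a.1 < v.1 → v.1 < b.1 → OnLine α β v) := by
  refine ⟨?_, ?_, ?_, ?_⟩
  · intro p hp
    have hconv : Convex ℝ {p : ℝ × ℝ | BelowLine α β p} := by
      have h := convex_halfSpace_le (𝕜 := ℝ)
        (f := fun p : ℝ × ℝ => p.2 - α * p.1) ⟨fun x y => by simp; ring, fun c x => by simp; ring⟩ β
      convert h using 1
      ext q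
      simp [BelowLine]
      constructor <;> intro <;> linarith
      ext q
      simp only [BelowLine, Set.mem_setOf_eq]
      constructor <;> intro <;> linarith
    exact convexHull_min hbelow hconv hp
  · intro huniq p hp hlt
    have h1 := hbelow p (Or.inl hp)
    rcases lt_or_eq_of_le h1 with h | h
    · exact h
    · exact absurd (huniq p hp h) (by rintro rfl; exact lt_irrefl _ hlt)
  · intro huniq p hp hlt
    have h1 := hbelow p (Or.inr hp)
    rcases lt_or_eq_of_le h1 with h | h
    · exact h
    · exact absurd (huniq p hp h) (by rintro rfl; exact lt_irrefl _ hlt)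
  · rintro v ⟨⟨hvS, -⟩, α', β', hvl, hbel⟩ h1 h2
    have ha' := hbel a (Or.inl ha)
    have hb' := hbel b (Or.inr hb)
    have hv := hbelow v hvS
    unfold OnLine BelowLine at *
    have key : α * v.1 + β ≤ α' * v.1 + β' := by
      nlinarith [mul_nonneg (sub_nonneg.2 (show a.2 ≤ α' * a.1 + β' from ha')) (sub_nonneg.2 h2.le),
        mul_nonneg (sub_nonneg.2 (show b.2 ≤ α' * b.1 + β' from hb')) (sub_nonneg.2 h1.le)]
    linarith
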